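/- Let s ≥ 2 and ε > 0 with n divisible by s, and n sufficiently large in terms of s and ε. Let P be an n-vertex s-uniform hypergraph with δ₁(P) ≥ (1 − 1/s + ε)·C(n−1, s−1). Then P contains a perfect matching. -/

import Mathlib

open Finset Equiv


lemma cardPermFix (k : ℕ) (i c : Fin (k+1)) :
    Fintype.card {σ : Equiv.Perm (Fin (k+1)) // σ i = c} = Nat.factorial k := by
  have e1 : {σ : Equiv.Perm (Fin (k+1)) // σ i = c} ≃ {σ : Equiv.Perm (Fin (k+1)) // σ 0 = c} :=
    Equiv.subtypeEquiv (Equiv.mulRight (Equiv.swap 0 i)) (by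
      intro σ
      simp [Equiv.Perm.mul_apply])
  have e2 : {σ : Equiv.Perm (Fin (k+1)) // σ 0 = c} ≃
      {p : Fin (k+1) × Equiv.Perm (Fin k) // p.1 = c} :=
    Equiv.subtypeEquiv Equiv.Perm.decomposeFin (by
      intro σ
      constructor
      · intro h
        have := Equiv.Perm.decomposeFin_symm_apply_zero (Equiv.Perm.decomposeFin σ).1
          (Equiv.Perm.decomposeFin σ).2
        simp only [Prod.mk.eta, Equiv.symm_apply_apply] at this
        rw [← this, h]
      · intro h
        have := Equiv.Perm.decomposeFin_symm_apply_zero (Equiv.Perm.decomposeFin σ).1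
          (Equiv.Perm.decomposeFin σ).2
        simp only [Prod.mk.eta, Equiv.symm_apply_apply] at this
        rw [this, h])
  have e3 : {p : Fin (k+1) × Equiv.Perm (Fin k) // p.1 = c} ≃ Equiv.Perm (Fin k) :=
    { toFun := fun p => p.1.2
      invFun := fun τ => ⟨(c, τ), rfl⟩
      left_inv := by rintro ⟨⟨a, τ⟩, h⟩; subst h; rfl
      right_inv := fun τ => rfl }
  rw [Fintype.card_congr (e1.trans (e2.trans e3)), Fintype.card_perm, Fintype.card_fin]


lemma partitionIntoBlocks {α : Type} [DecidableEq α] (s : ℕ) (hs : 0 < s) :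
    ∀ T : Finset α, s ∣ T.card →
    ∃ B : Finset (Finset α), (∀ b ∈ B, b.card = s) ∧
      (∀ b ∈ B, ∀ b' ∈ B, b ≠ b' → Disjoint b b') ∧ B.biUnion id = T := by
  intro T
  induction T using Finset.strongInduction with
  | _ T ih =>
    intro hdvd
    rcases Finset.eq_empty_or_nonempty T with rfl | hne
    · exact ⟨∅, by simp⟩
    · have hcard : s ≤ T.card := by
        rcases hdvd with ⟨k, hk⟩
        rcases Nat.eq_zero_or_pos k with rfl | hk0
        · simp [hk] at hne ⊢
          exact absurd (Finset.card_eq_zero.mp hk) (Finset.nonempty_iff_ne_empty.mp hne)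
        · calc s = s * 1 := (mul_one s).symm
            _ ≤ s * k := Nat.mul_le_mul_left s hk0
            _ = T.card := hk.symm
      obtain ⟨b₀, hb₀sub, hb₀card⟩ := Finset.exists_subset_card_eq hcard
      have hssub : T \ b₀ ⊂ T := by
        apply Finset.sdiff_ssubset hb₀sub
        rw [← Finset.card_pos, hb₀card]; exact hs
      have hdvd' : s ∣ (T \ b₀).card := by
        rw [Finset.card_sdiff_of_subset hb₀sub, hb₀card]
        exact Nat.dvd_sub hdvd dvd_rfl
      obtain ⟨B, hB1, hB2, hB3⟩ := ih _ hssub hdvd'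
      refine ⟨insert b₀ B, ?_, ?_, ?_⟩
      · intro b hb
        rcases Finset.mem_insert.mp hb with rfl | hb
        · exact hb₀card
        · exact hB1 b hb
      · have hdisj : ∀ b ∈ B, Disjoint b₀ b := by
          intro b hb
          have : b ⊆ T \ b₀ := by
            intro x hx
            rw [← hB3]
            exact Finset.mem_biUnion.mpr ⟨b, hb, hx⟩
          exact Finset.disjoint_left.mpr fun x hx1 hx2 =>
            (Finset.mem_sdiff.mp (this hx2)).2 hx1
        intro b hb b' hb' hne'
        rcases Finset.mem_insert.mp hb with hbe | hb
        · rcases Finset.mem_insert.mp hb' with hbe' | hb'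
          · exact absurd (hbe.trans hbe'.symm) hne'
          · rw [hbe]; exact hdisj b' hb'
        · rcases Finset.mem_insert.mp hb' with hbe' | hb'
          · rw [hbe']; exact (hdisj b hb).symm
          · exact hB2 b hb b' hb' hne'
      · rw [Finset.biUnion_insert, hB3]
        simp only [id]
        rw [Finset.union_sdiff_of_subset hb₀sub]


def trSet {α : Type} [DecidableEq α] (W : Finset (Finset α)) (k : ℕ) : Finset (Finset α) :=
  ((W.biUnion id).powersetCard k).filter (fun t => ∀ b ∈ W, (t ∩ b).Nonempty)

def badSet {α : Type} [DecidableEq α] (P W : Finset (Finset α)) (k : ℕ) (v : α) : Finset (Finset α) :=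
  (trSet W k).filter (fun t => insert v t ∉ P)

lemma window_lemma {α : Type} [DecidableEq α]  (k : ℕ) (P : Finset (Finset α)) (W : Finset (Finset α))
    (hWcard : W.card = k)
    (hbsize : ∀ b ∈ W, b.card = k + 1)
    (hbdisj : ∀ b ∈ W, ∀ b' ∈ W, b ≠ b' → Disjoint b b')
    (u : Fin (k+1) → α)
    (hsum : ∑ i : Fin (k+1), (badSet P W k (u i)).card < (k+1)^k) :
    ∃ t : Fin (k+1) → Finset α, (∀ i, t i ∈ trSet W k) ∧
      (∀ i, insert (u i) (t i) ∈ P) ∧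
      (∀ i i', i ≠ i' → Disjoint (t i) (t i')) := by
  classical
  have eW : (W : Type _) ≃ Fin k := W.equivFinOfCardEq hWcard
  set w : Fin k → Finset α := fun j => (eW.symm j : W).1 with hw
  have hwmem : ∀ j, w j ∈ W := fun j => (eW.symm j).2
  have hwinj : Function.Injective w := by
    intro a b hab
    have : eW.symm a = eW.symm b := Subtype.ext hab
    simpa using congrArg eW this
  have hwsurj : ∀ b ∈ W, ∃ j, w j = b := by
    intro b hb
    exact ⟨eW ⟨b, hb⟩, by simp [hw]⟩
  have hcard : ∀ j, (w j).card = k + 1 := fun j => hbsize _ (hwmem j)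
  set X : ∀ j : Fin k, (w j : Type _) ≃ Fin (k+1) :=
    fun j => (w j).equivFinOfCardEq (hcard j) with hX
  set x : Fin k → Fin (k+1) → α := fun j r => ((X j).symm r : (w j)).1 with hx
  have hxmem : ∀ j r, x j r ∈ w j := fun j r => ((X j).symm r).2
  have hxinj : ∀ j, Function.Injective (x j) := by
    intro j a b hab
    have : (X j).symm a = (X j).symm b := Subtype.ext hab
    simpa using congrArg (X j) this
  have hblock : ∀ j j' r r', x j r = x j' r' → j = j' := by
    intro j j' r r' h
    by_contra hne
    have hd := hbdisj _ (hwmem j) _ (hwmem j') (fun e => hne (hwinj e))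
    exact (Finset.disjoint_left.mp hd (hxmem j r)) (h ▸ hxmem j' r')
  set T : (Fin k → Equiv.Perm (Fin (k+1))) → Fin (k+1) → Finset α :=
    fun π i => Finset.image (fun j => x j (π j i)) Finset.univ with hT
  have hTmem : ∀ π i, T π i ∈ trSet W k := by
    intro π i
    rw [trSet, Finset.mem_filter, Finset.mem_powersetCard]
    refine ⟨⟨?_, ?_⟩, ?_⟩
    · intro a ha
      obtain ⟨j, _, rfl⟩ := Finset.mem_image.mp ha
      exact Finset.mem_biUnion.mpr ⟨w j, hwmem j, hxmem _ _⟩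
    · rw [Finset.card_image_of_injective _ (fun a b h => hblock _ _ _ _ h),
        Finset.card_univ, Fintype.card_fin]
    · intro b hb
      obtain ⟨j, rfl⟩ := hwsurj b hb
      exact ⟨x j (π j i), Finset.mem_inter.mpr
        ⟨Finset.mem_image_of_mem _ (Finset.mem_univ j), hxmem _ _⟩⟩
  have hTdisj : ∀ π i i', i ≠ i' → Disjoint (T π i) (T π i') := by
    intro π i i' hne
    rw [Finset.disjoint_left]
    intro a ha ha'
    obtain ⟨j, _, rfl⟩ := Finset.mem_image.mp ha
    obtain ⟨j', _, he⟩ := Finset.mem_image.mp ha'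
    have hj : j' = j := hblock _ _ _ _ he
    subst hj
    exact hne (((π j').injective (hxinj j' he)).symm)
  by_contra hcon
  have hbadπ : ∀ π : Fin k → Equiv.Perm (Fin (k+1)), ∃ i, insert (u i) (T π i) ∉ P := by
    intro π
    by_contra hno
    push_neg at hno
    exact hcon ⟨T π, hTmem π, hno, hTdisj π⟩
  set bp : Finset (Fin (k+1) × Finset α) :=
    Finset.univ.biUnion (fun i => (badSet P W k (u i)).image (fun t => (i, t))) with hbp
  have hbpcard : bp.card = ∑ i : Fin (k+1), (badSet P W k (u i)).card := by
    rw [hbp, Finset.card_biUnion]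
    · exact Finset.sum_congr rfl fun i _ =>
        Finset.card_image_of_injective _ (fun a b h => congrArg Prod.snd h)
    · intro i _ i' _ hne
      rw [Function.onFun, Finset.disjoint_left]
      rintro ⟨a, b⟩ hab hab'
      obtain ⟨t, _, ht⟩ := Finset.mem_image.mp hab
      obtain ⟨t', _, ht'⟩ := Finset.mem_image.mp hab'
      exact hne ((congrArg Prod.fst ht).trans (congrArg Prod.fst ht').symm)
  set Φ : (Fin k → Equiv.Perm (Fin (k+1))) → Fin (k+1) × Finset α :=
    fun π => ⟨(hbadπ π).choose, T π (hbadπ π).choose⟩ with hΦ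
  have hmaps : ∀ π ∈ (Finset.univ : Finset (Fin k → Equiv.Perm (Fin (k+1)))), Φ π ∈ bp := by
    intro π _
    rw [hbp, Finset.mem_biUnion]
    refine ⟨(hbadπ π).choose, Finset.mem_univ _, ?_⟩
    apply Finset.mem_image_of_mem
    rw [badSet, Finset.mem_filter]
    exact ⟨hTmem _ _, (hbadπ π).choose_spec⟩
  have hfiber : ∀ p ∈ bp,
      (Finset.univ.filter (fun π : Fin k → Equiv.Perm (Fin (k+1)) => Φ π = p)).card
        ≤ (Nat.factorial k)^k := by
    intro p _
    rcases (Finset.univ.filter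
        (fun π : Fin k → Equiv.Perm (Fin (k+1)) => Φ π = p)).eq_empty_or_nonempty with he | hne
    · simp [he]
    · obtain ⟨π₀, hπ₀⟩ := hne
      have hΦπ₀ : Φ π₀ = p := (Finset.mem_filter.mp hπ₀).2
      have hTval : ∀ π : Fin k → Equiv.Perm (Fin (k+1)), Φ π = p → T π p.1 = p.2 := by
        intro π hp
        have h1 : (hbadπ π).choose = p.1 := congrArg Prod.fst hp
        have h2 : T π (hbadπ π).choose = p.2 := congrArg Prod.snd hp
        rw [← h1]; exact h2
      have hkey : ∀ π : Fin k → Equiv.Perm (Fin (k+1)), Φ π = p →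
          ∀ j, π j p.1 = π₀ j p.1 := by
        intro π hp j
        have hTT : T π p.1 = T π₀ p.1 := (hTval π hp).trans (hTval π₀ hΦπ₀).symm
        have hmem : x j (π j p.1) ∈ T π₀ p.1 := by
          rw [← hTT]
          exact Finset.mem_image_of_mem _ (Finset.mem_univ j)
        obtain ⟨j', _, he'⟩ := Finset.mem_image.mp hmem
        have : j' = j := hblock _ _ _ _ he'
        subst this
        exact (hxinj j' he').symm
      have hsub : (Finset.univ.filter
          (fun π : Fin k → Equiv.Perm (Fin (k+1)) => Φ π = p)) ⊆
          (Finset.univ.filter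
          (fun π : Fin k → Equiv.Perm (Fin (k+1)) => ∀ j, π j p.1 = π₀ j p.1)) := by
        intro π hπ
        rw [Finset.mem_filter] at hπ ⊢
        exact ⟨Finset.mem_univ _, hkey π hπ.2⟩
      calc (Finset.univ.filter
          (fun π : Fin k → Equiv.Perm (Fin (k+1)) => Φ π = p)).card
          ≤ (Finset.univ.filter
          (fun π : Fin k → Equiv.Perm (Fin (k+1)) => ∀ j, π j p.1 = π₀ j p.1)).card :=
            Finset.card_le_card hsub
        _ = Fintype.card {π : Fin k → Equiv.Perm (Fin (k+1)) // ∀ j, π j p.1 = π₀ j p.1} :=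
            (Fintype.card_subtype _).symm
        _ = Fintype.card (∀ j : Fin k, {σ : Equiv.Perm (Fin (k+1)) // σ p.1 = π₀ j p.1}) :=
            Fintype.card_congr (Equiv.subtypePiEquivPi (p := fun j (σ : Equiv.Perm (Fin (k+1))) => σ p.1 = π₀ j p.1))
        _ = ∏ j : Fin k, Fintype.card {σ : Equiv.Perm (Fin (k+1)) // σ p.1 = π₀ j p.1} :=
            Fintype.card_pi
        _ = ∏ j : Fin k, Nat.factorial k := by
            exact Finset.prod_congr rfl fun j _ => cardPermFix k p.1 (π₀ j p.1)
        _ = (Nat.factorial k)^k := by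
            rw [Finset.prod_const, Finset.card_univ, Fintype.card_fin]
  have htotal := Finset.card_le_mul_card_image_of_maps_to hmaps ((Nat.factorial k)^k) hfiber
  rw [Finset.card_univ, Fintype.card_fun, Fintype.card_perm, Fintype.card_fin, Fintype.card_fin,
    hbpcard] at htotal
  have hlt : (Nat.factorial k)^k * (∑ i : Fin (k+1), (badSet P W k (u i)).card)
      < (Nat.factorial k)^k * (k+1)^k :=
    mul_lt_mul_of_pos_left hsum (pow_pos (Nat.factorial_pos k) k)
  have : (Nat.factorial (k+1))^k = (Nat.factorial k)^k * (k+1)^k := by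
    rw [Nat.factorial_succ, ← Nat.mul_pow, Nat.mul_comm (k+1) (Nat.factorial k)]
  omega


lemma numeric (k n Bl : ℕ) (hk : 1 ≤ k) (ε : ℝ) (hε : 0 < ε)
    (hBl : (k+1) * Bl = n - (k+1))
    (hn2 : (k+1)*(k+1) + (k+1) + 2 ≤ n)
    (hb1 : (((k+1)*(k+1) : ℕ) : ℝ) < ε * ((n:ℝ) - 1)) :
    (1 - (k+1:ℝ)*ε) * (((n-1).choose k : ℕ) : ℝ) < (((Bl.choose k) * (k+1)^k : ℕ) : ℝ) := by
  have hs1 : 1 ≤ n := by omega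
  have hBlk : k ≤ Bl := by
    have hq : (k+1)*(k+1) < (k+1)*Bl := by
      rw [hBl]
      generalize hg : (k+1)*(k+1) = q at hn2 ⊢
      omega
    have := Nat.lt_of_mul_lt_mul_left hq
    omega
  have hchoosepos : 0 < Bl.choose k := Nat.choose_pos hBlk
  have hRHSpos : (0:ℝ) < (((Bl.choose k) * (k+1)^k : ℕ) : ℝ) := by
    have : 0 < (Bl.choose k) * (k+1)^k := Nat.mul_pos hchoosepos (Nat.pow_pos (by omega))
    exact_mod_cast this
  rcases le_or_gt 1 ((k+1:ℝ)*ε) with h1 | h1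
  · have hC : (0:ℝ) ≤ (((n-1).choose k : ℕ) : ℝ) := by positivity
    nlinarith
  · have hnk : k ≤ n - 1 := by omega
    set b : ℝ := (n:ℝ) - 1 with hb
    set S2 : ℝ := ((k:ℝ)+1) * ((k:ℝ)+1) with hS2
    have hncast : (((k:ℝ)+1)*((k:ℝ)+1) + ((k:ℝ)+1) + 2 : ℝ) ≤ (n:ℝ) := by exact_mod_cast hn2
    have hS2b : S2 ≤ b := by rw [hS2, hb]; nlinarith
    have hbpos : (0:ℝ) < b := by rw [hb]; nlinarith
    have hεb : S2 < ε * b := by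
      rw [hS2, hb]; push_cast at hb1; exact hb1
    have hstep1 : (1 - ((k:ℝ)+1)*ε) < (1 - (k:ℝ)*S2/b) := by
      have h3 : (k:ℝ)*S2/b < ((k:ℝ)+1)*ε := by
        rw [div_lt_iff₀ hbpos]
        have hk0 : (0:ℝ) ≤ (k:ℝ) := by positivity
        nlinarith
      linarith
    have hxge : (-2:ℝ) ≤ -(S2/b) := by
      have : S2/b ≤ 1 := (div_le_one hbpos).mpr hS2b
      have h0 : 0 ≤ S2/b := by positivity
      linarith
    have hbern' : 1 - (k:ℝ)*S2/b ≤ (1 - S2/b)^k := by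
      have hbern : 1 + (k:ℝ) * (-(S2/b)) ≤ (1 + (-(S2/b)))^k := one_add_mul_le_pow hxge k
      calc 1 - (k:ℝ)*S2/b = 1 + (k:ℝ) * (-(S2/b)) := by ring
        _ ≤ (1 + (-(S2/b)))^k := hbern
        _ = (1 - S2/b)^k := by rw [sub_eq_add_neg]
    have hF1 : (Nat.factorial k : ℝ) * (((n-1).choose k : ℕ) : ℝ) ≤ b^k := by
      have h2 : (n-1).descFactorial k ≤ (n-1)^k := Nat.descFactorial_le_pow _ _
      have h1 : (Nat.factorial k) * ((n-1).choose k) ≤ (n-1)^k := by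
        rw [← Nat.descFactorial_eq_factorial_mul_choose]; exact h2
      have h3 : ((n-1 : ℕ) : ℝ) = b := by rw [hb]; push_cast [hs1]; ring
      calc (Nat.factorial k : ℝ) * (((n-1).choose k : ℕ) : ℝ)
          = (((Nat.factorial k) * ((n-1).choose k) : ℕ) : ℝ) := by push_cast; ring
        _ ≤ (((n-1)^k : ℕ) : ℝ) := by exact_mod_cast h1
        _ = b^k := by rw [← h3]; push_cast; ring
    have hF2 : (k+1)^k * (Bl + 1 - k)^k ≤ (k+1)^k * ((Nat.factorial k) * (Bl.choose k)) := by
      apply Nat.mul_le_mul_left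
      rw [← Nat.descFactorial_eq_factorial_mul_choose]
      exact Nat.pow_sub_le_descFactorial Bl k
    have he1 : (k+1)*(Bl+1-k) + (k*k + k) = n := by
      zify [show k ≤ Bl + 1 by omega, show k + 1 ≤ n by omega] at hBl ⊢
      linear_combination hBl
    have hbase : b - S2 ≤ (((k+1)*(Bl+1-k) : ℕ) : ℝ) := by
      have hc := congrArg (fun m : ℕ => (m : ℝ)) he1
      push_cast at hc
      push_cast
      rw [hb, hS2]
      linarith [hc]
    -- final chain
    have hkf : (0:ℝ) < (Nat.factorial k : ℝ) := by exact_mod_cast Nat.factorial_pos k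
    have hbk : (0:ℝ) < b^k := pow_pos hbpos k
    have hbS2 : (0:ℝ) ≤ b - S2 := by linarith
    refine lt_of_mul_lt_mul_left ?_ (le_of_lt hkf)
    calc (Nat.factorial k : ℝ) * ((1 - ((k:ℝ)+1)*ε) * (((n-1).choose k : ℕ) : ℝ))
        = (1 - ((k:ℝ)+1)*ε) * ((Nat.factorial k : ℝ) * (((n-1).choose k : ℕ) : ℝ)) := by ring
      _ ≤ (1 - ((k:ℝ)+1)*ε) * b^k := by
          apply mul_le_mul_of_nonneg_left hF1; linarith
      _ < (1 - (k:ℝ)*S2/b) * b^k := by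
          exact mul_lt_mul_of_pos_right hstep1 hbk
      _ ≤ ((1 - S2/b)^k) * b^k := by
          apply mul_le_mul_of_nonneg_right hbern' (le_of_lt hbk)
      _ = ((1 - S2/b)*b)^k := by rw [mul_pow]
      _ = (b - S2)^k := by
          congr 1
          rw [sub_mul, one_mul, div_mul_cancel₀ _ (ne_of_gt hbpos)]
      _ ≤ ((((k+1)*(Bl+1-k) : ℕ) : ℝ))^k := by
          gcongr
      _ = ((((k+1)*(Bl+1-k))^k : ℕ) : ℝ) := by push_cast; ring
      _ = (((k+1)^k * (Bl+1-k)^k : ℕ) : ℝ) := by rw [Nat.mul_pow]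
      _ ≤ (((k+1)^k * ((Nat.factorial k) * (Bl.choose k)) : ℕ) : ℝ) := by exact_mod_cast hF2
      _ = (Nat.factorial k : ℝ) * ((((Bl.choose k) * (k+1)^k : ℕ)) : ℝ) := by push_cast; ring


/-- Daykin–Häggkvist: for `s ≥ 2`, `ε > 0` and `n` large and divisible by `s`,
every `n`-vertex `s`-uniform hypergraph `P` with `δ₁(P) ≥ (1 − 1/s + ε)·C(n−1,s−1)` has a
perfect matching. -/
theorem stmt8 (s : ℕ) (hs : 2 ≤ s) (ε : ℝ) (hε : 0 < ε) :
    ∃ n₀ : ℕ, ∀ n : ℕ, n₀ ≤ n → s ∣ n →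
    ∀ (α : Type) [Fintype α] [DecidableEq α], Fintype.card α = n →
    ∀ P : Finset (Finset α), (∀ e ∈ P, e.card = s) →
    (∀ v : α, (1 - 1/(s:ℝ) + ε) * (((n - 1).choose (s - 1) : ℕ) : ℝ) ≤
        ((P.filter fun e => v ∈ e).card : ℝ)) →
    ∃ M ⊆ P, (∀ e ∈ M, ∀ f ∈ M, e ≠ f → Disjoint e f) ∧ M.biUnion id = Finset.univ := by
  obtain ⟨k, rfl⟩ : ∃ k, s = k + 1 := ⟨s - 1, by omega⟩
  have hk : 1 ≤ k := by omega
  refine ⟨(k+1)*(k+1) + (k+1) + 2 + ⌈(((k+1)*(k+1) : ℕ) : ℝ)/ε⌉₊ + 1, ?_⟩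
  intro n hn hdvd α _ _ hcardα P hP hdeg
  classical
  simp only [Nat.add_sub_cancel] at hdeg
  have hn2 : (k+1)*(k+1) + (k+1) + 2 ≤ n := by omega
  have hb1 : (((k+1)*(k+1) : ℕ) : ℝ) < ε * ((n:ℝ) - 1) := by
    have hceil := Nat.le_ceil ((((k+1)*(k+1) : ℕ) : ℝ)/ε)
    have hncast : ((((k+1)*(k+1) + (k+1) + 2 + ⌈(((k+1)*(k+1):ℕ):ℝ)/ε⌉₊ + 1 : ℕ)) : ℝ)
        ≤ (n:ℝ) := by exact_mod_cast hn
    push_cast at hceil hncast ⊢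
    have hA : (0:ℝ) ≤ ((k:ℝ)+1)*((k:ℝ)+1) := by positivity
    have hB' : (0:ℝ) ≤ (k:ℝ)+1 := by positivity
    have h2 : ((k:ℝ)+1)*((k:ℝ)+1)/ε + 1 ≤ (n:ℝ) - 1 := by linarith
    have h3 := mul_le_mul_of_nonneg_left h2 (le_of_lt hε)
    have h4 : ε * (((k:ℝ)+1)*((k:ℝ)+1)/ε + 1) = ((k:ℝ)+1)*((k:ℝ)+1) + ε := by field_simp
    nlinarith [h3, h4]
  set cand : Finset (Finset (Finset α)) :=
    P.powerset.filter (fun M => ∀ e ∈ M, ∀ f ∈ M, e ≠ f → Disjoint e f) with hcand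
  have hcandne : cand.Nonempty := ⟨∅, by simp [hcand]⟩
  obtain ⟨M, hMc, hMmax⟩ := Finset.exists_max_image cand Finset.card hcandne
  have hMP : M ⊆ P := Finset.mem_powerset.mp (Finset.mem_filter.mp hMc).1
  have hMdisj : ∀ e ∈ M, ∀ f ∈ M, e ≠ f → Disjoint e f := (Finset.mem_filter.mp hMc).2
  by_cases hcov : M.biUnion id = Finset.univ
  · exact ⟨M, hMP, hMdisj, hcov⟩
  exfalso
  set U : Finset α := Finset.univ \ M.biUnion id with hU
  have hUne : U.Nonempty := by
    rw [hU, Finset.sdiff_nonempty]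
    intro h
    exact hcov (Finset.univ_subset_iff.mp h)
  have hMB : (M.biUnion id).card = M.card * (k+1) := by
    rw [Finset.card_biUnion (t := id) (fun e he f hf hne => hMdisj e he f hf hne)]
    simp only [id_eq]
    rw [Finset.sum_congr rfl (fun e he => hP e (hMP he)), Finset.sum_const, smul_eq_mul]
  have hBUsub : (M.biUnion id).card ≤ n := by
    rw [← hcardα, ← Finset.card_univ]
    exact Finset.card_le_card (Finset.subset_univ _)
  have hUcard : U.card + M.card * (k+1) = n := by
    rw [hU, Finset.card_sdiff_of_subset (Finset.subset_univ _), Finset.card_univ, hcardα, hMB]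
    rw [hMB] at hBUsub
    omega
  have hdvdU : (k+1) ∣ U.card := by
    obtain ⟨c, hc⟩ := hdvd
    have h1 : (k+1) * M.card ≤ (k+1) * c := by
      rw [← hc]
      calc (k+1) * M.card = M.card * (k+1) := by ring
        _ ≤ n := by omega
    have hle : M.card ≤ c := Nat.le_of_mul_le_mul_left h1 (by omega)
    refine ⟨c - M.card, ?_⟩
    zify [hle]
    have hUz : (U.card : ℤ) + (M.card : ℤ) * ((k:ℤ)+1) = (n:ℤ) := by exact_mod_cast hUcard
    have hcz : (n:ℤ) = ((k:ℤ)+1) * c := by exact_mod_cast hc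
    linarith [hUz, hcz]
  have hUk : k+1 ≤ U.card := Nat.le_of_dvd (Finset.card_pos.mpr hUne) hdvdU
  obtain ⟨U₀, hU₀U, hU₀card⟩ := Finset.exists_subset_card_eq hUk
  set eU := U₀.equivFinOfCardEq hU₀card with heU
  set u : Fin (k+1) → α := fun i => (eU.symm i : U₀).1 with hu
  have huU₀ : ∀ i, u i ∈ U₀ := fun i => (eU.symm i).2
  have huU : ∀ i, u i ∈ U := fun i => hU₀U (huU₀ i)
  have huinj : Function.Injective u := by
    intro a b hab
    have : eU.symm a = eU.symm b := Subtype.ext hab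
    simpa using congrArg eU this
  set R : Finset α := U \ U₀ with hR
  have hRcard : R.card = U.card - (k+1) := by
    rw [hR, Finset.card_sdiff_of_subset hU₀U, hU₀card]
  have hdvdR : (k+1) ∣ R.card := by
    rw [hRcard]
    exact Nat.dvd_sub hdvdU ⟨1, by ring⟩
  obtain ⟨B, hB1, hB2, hB3⟩ := partitionIntoBlocks (k+1) (by omega) R hdvdR
  have hBsubR : ∀ b ∈ B, b ⊆ R := by
    intro b hb x hx
    rw [← hB3]
    exact Finset.mem_biUnion.mpr ⟨b, hb, hx⟩
  have hMUdisj : ∀ e ∈ M, ∀ x ∈ e, x ∉ U := by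
    intro e he x hx hxU
    rw [hU, Finset.mem_sdiff] at hxU
    exact hxU.2 (Finset.mem_biUnion.mpr ⟨e, he, hx⟩)
  set Blocks : Finset (Finset α) := M ∪ B with hBlocks
  have hBlsize : ∀ b ∈ Blocks, b.card = k+1 := by
    intro b hb
    rcases Finset.mem_union.mp hb with h | h
    · exact hP b (hMP h)
    · exact hB1 b h
  have hBldisj : ∀ b ∈ Blocks, ∀ b' ∈ Blocks, b ≠ b' → Disjoint b b' := by
    have hcross : ∀ b ∈ M, ∀ b' ∈ B, Disjoint b b' := by
      intro b hb b' hb'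
      rw [Finset.disjoint_right]
      intro x hx hxb
      exact hMUdisj b hb x hxb (Finset.mem_sdiff.mp (hBsubR b' hb' hx)).1
    intro b hb b' hb' hne
    rcases Finset.mem_union.mp hb with h | h <;> rcases Finset.mem_union.mp hb' with h' | h'
    · exact hMdisj b h b' h' hne
    · exact hcross b h b' h'
    · exact (hcross b' h' b h).symm
    · exact hB2 b h b' h' hne
  have hMBdisj : Disjoint M B := by
    rw [Finset.disjoint_left]
    intro b hbM hbB
    have hbne : b.Nonempty := by
      rw [← Finset.card_pos, hB1 b hbB]; omega
    obtain ⟨x, hx⟩ := hbne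
    exact hMUdisj b hbM x hx (Finset.mem_sdiff.mp (hBsubR b hbB hx)).1
  have hBR : (B.biUnion id).card = B.card * (k+1) := by
    rw [Finset.card_biUnion (t := id) (fun e he f hf hne => hB2 e he f hf hne)]
    simp only [id_eq]
    rw [Finset.sum_congr rfl (fun b hb => hB1 b hb), Finset.sum_const, smul_eq_mul]
  have hBcardR : B.card * (k+1) = R.card := by rw [← hBR, hB3]
  have hBlcard : (k+1) * Blocks.card = n - (k+1) := by
    rw [hBlocks, Finset.card_union_of_disjoint hMBdisj]
    have e1 : (k+1) * (M.card + B.card) = M.card * (k+1) + B.card * (k+1) := by ring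
    rw [e1, hBcardR, hRcard]
    generalize M.card * (k+1) = q at hUcard ⊢
    omega
  set NEset : Fin (k+1) → Finset (Finset α) := fun i =>
    ((Finset.univ.erase (u i)).powersetCard k).filter (fun t => insert (u i) t ∉ P) with hNE
  set 𝒲 : Finset (Finset (Finset α)) := Blocks.powersetCard k with h𝒲
  have hnoU₀ : ∀ W ∈ 𝒲, ∀ x ∈ W.biUnion id, x ∉ U₀ := by
    intro W hW x hx hxU₀
    obtain ⟨b, hbW, hxb⟩ := Finset.mem_biUnion.mp hx
    have hbBl : b ∈ Blocks := (Finset.mem_powersetCard.mp hW).1 hbW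
    rcases Finset.mem_union.mp hbBl with h | h
    · exact hMUdisj b h x hxb (hU₀U hxU₀)
    · exact (Finset.mem_sdiff.mp (hBsubR b h hxb)).2 hxU₀
  have key1 : ∀ i, (∑ W ∈ 𝒲, (badSet P W k (u i)).card) ≤ (NEset i).card := by
    intro i
    have hsub2 : ∀ W ∈ 𝒲, ∀ W' ∈ 𝒲, ∀ t, t ∈ badSet P W k (u i) →
        t ∈ badSet P W' k (u i) → W ⊆ W' := by
      intro W hW W' hW' t ht ht' b hbW
      simp only [badSet, trSet, Finset.mem_filter, Finset.mem_powersetCard] at ht ht'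
      obtain ⟨x, hx⟩ := ht.1.2 b hbW
      have hxt : x ∈ t := (Finset.mem_inter.mp hx).1
      have hxb : x ∈ b := (Finset.mem_inter.mp hx).2
      obtain ⟨b', hb'W', hxb'⟩ := Finset.mem_biUnion.mp (ht'.1.1.1 hxt)
      have hbBl : b ∈ Blocks := (Finset.mem_powersetCard.mp hW).1 hbW
      have hb'Bl : b' ∈ Blocks := (Finset.mem_powersetCard.mp hW').1 hb'W'
      by_cases hbb : b = b'
      · rw [hbb]; exact hb'W'
      · exact absurd hxb' (Finset.disjoint_left.mp (hBldisj b hbBl b' hb'Bl hbb) hxb)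
    have hdisjfam : ∀ W ∈ 𝒲, ∀ W' ∈ 𝒲, W ≠ W' →
        Disjoint (badSet P W k (u i)) (badSet P W' k (u i)) := by
      intro W hW W' hW' hne
      rw [Finset.disjoint_left]
      intro t ht ht'
      exact hne (Finset.Subset.antisymm (hsub2 W hW W' hW' t ht ht')
        (hsub2 W' hW' W hW t ht' ht))
    calc ∑ W ∈ 𝒲, (badSet P W k (u i)).card
        = (𝒲.biUnion (fun W => badSet P W k (u i))).card :=
          (Finset.card_biUnion hdisjfam).symm
      _ ≤ (NEset i).card := by
          apply Finset.card_le_card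
          intro t ht
          obtain ⟨W, hW, htW⟩ := Finset.mem_biUnion.mp ht
          simp only [badSet, trSet, Finset.mem_filter, Finset.mem_powersetCard] at htW
          rw [hNE, Finset.mem_filter, Finset.mem_powersetCard]
          refine ⟨⟨?_, htW.1.1.2⟩, htW.2⟩
          intro y hy
          rw [Finset.mem_erase]
          refine ⟨?_, Finset.mem_univ _⟩
          intro hyu
          exact hnoU₀ W hW y (htW.1.1.1 hy) (hyu ▸ huU₀ i)
  have key2 : ∀ i, (NEset i).card + (P.filter (fun e => u i ∈ e)).card ≤ (n-1).choose k := by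
    intro i
    have htot : ((Finset.univ.erase (u i)).powersetCard k).card = (n-1).choose k := by
      rw [Finset.card_powersetCard, Finset.card_erase_of_mem (Finset.mem_univ _),
        Finset.card_univ, hcardα]
    have hsplit := Finset.card_filter_add_card_filter_not
      (s := (Finset.univ.erase (u i)).powersetCard k) (p := fun t => insert (u i) t ∈ P)
    have hdegle : (P.filter (fun e => u i ∈ e)).card ≤
        (((Finset.univ.erase (u i)).powersetCard k).filter
          (fun t => insert (u i) t ∈ P)).card := by
      apply Finset.card_le_card_of_injOn (fun e => e.erase (u i))
      · intro e he
        rw [Finset.mem_coe, Finset.mem_filter] at he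
        rw [Finset.mem_coe, Finset.mem_filter, Finset.mem_powersetCard]
        beta_reduce
        refine ⟨⟨?_, ?_⟩, ?_⟩
        · intro y hy
          rw [Finset.mem_erase] at hy ⊢
          exact ⟨hy.1, Finset.mem_univ _⟩
        · rw [Finset.card_erase_of_mem he.2, hP e he.1]
          omega
        · rw [Finset.insert_erase he.2]; exact he.1
      · intro e he e' he' hee
        simp only [Finset.coe_filter, Set.mem_setOf_eq] at he he'
        have hee' : e.erase (u i) = e'.erase (u i) := hee
        rw [← Finset.insert_erase he.2, ← Finset.insert_erase he'.2, hee']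
    simp only [hNE]
    rw [htot.symm]
    omega
  set C : ℝ := (((n-1).choose k : ℕ) : ℝ) with hCdef
  have hNEreal : ∀ i, ((NEset i).card : ℝ) ≤ (1/((k:ℝ)+1) - ε) * C := by
    intro i
    have h1 : ((NEset i).card : ℝ) + ((P.filter (fun e => u i ∈ e)).card : ℝ) ≤ C := by
      rw [hCdef]
      exact_mod_cast key2 i
    have h2 := hdeg (u i)
    push_cast at h2
    nlinarith [h2, h1]
  have hkne : ((k:ℝ)+1) ≠ 0 := by positivity
  have hsumNE : (∑ i : Fin (k+1), ((NEset i).card:ℝ)) ≤ (1 - ((k:ℝ)+1)*ε) * C := by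
    calc ∑ i : Fin (k+1), ((NEset i).card:ℝ) ≤ ∑ _i : Fin (k+1), (1/((k:ℝ)+1) - ε) * C :=
        Finset.sum_le_sum (fun i _ => hNEreal i)
      _ = ((k:ℝ)+1) * ((1/((k:ℝ)+1) - ε) * C) := by
          rw [Finset.sum_const, Finset.card_univ, Fintype.card_fin, nsmul_eq_mul]
          push_cast
          ring
      _ = (1 - ((k:ℝ)+1)*ε) * C := by
          field_simp
  have hnum := numeric k n Blocks.card hk ε hε hBlcard hn2 hb1
  have h𝒲card : 𝒲.card = Blocks.card.choose k := by rw [h𝒲, Finset.card_powersetCard]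
  have key3 : (∑ W ∈ 𝒲, ∑ i : Fin (k+1), (badSet P W k (u i)).card) < 𝒲.card * (k+1)^k := by
    have hsum1 : (∑ W ∈ 𝒲, ∑ i : Fin (k+1), (badSet P W k (u i)).card)
        = ∑ i : Fin (k+1), ∑ W ∈ 𝒲, (badSet P W k (u i)).card := Finset.sum_comm
    have hle : (∑ i : Fin (k+1), ∑ W ∈ 𝒲, (badSet P W k (u i)).card)
        ≤ ∑ i : Fin (k+1), (NEset i).card := Finset.sum_le_sum (fun i _ => key1 i)
    have hreal : ((∑ i : Fin (k+1), (NEset i).card : ℕ) : ℝ) < ((𝒲.card * (k+1)^k : ℕ) : ℝ) := by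
      rw [h𝒲card]
      have hcastsum : ((∑ i : Fin (k+1), (NEset i).card : ℕ) : ℝ)
          = ∑ i : Fin (k+1), ((NEset i).card:ℝ) := by push_cast; rfl
      rw [hcastsum]
      exact lt_of_le_of_lt hsumNE hnum
    have hfin : (∑ i : Fin (k+1), (NEset i).card) < 𝒲.card * (k+1)^k := by exact_mod_cast hreal
    rw [hsum1]
    exact lt_of_le_of_lt hle hfin
  obtain ⟨W, hW𝒲, hWgood⟩ : ∃ W ∈ 𝒲, (∑ i : Fin (k+1), (badSet P W k (u i)).card) < (k+1)^k := by
    by_contra hcon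
    push_neg at hcon
    have : 𝒲.card * (k+1)^k ≤ ∑ W ∈ 𝒲, ∑ i : Fin (k+1), (badSet P W k (u i)).card := by
      calc 𝒲.card * (k+1)^k = ∑ _W ∈ 𝒲, (k+1)^k := by rw [Finset.sum_const, smul_eq_mul]
        _ ≤ _ := Finset.sum_le_sum (fun W hW => hcon W hW)
    omega
  have hWfacts := Finset.mem_powersetCard.mp hW𝒲
  obtain ⟨t, htTr, htP, htdisj⟩ := window_lemma k P W hWfacts.2
    (fun b hb => hBlsize b (hWfacts.1 hb))
    (fun b hb b' hb' hne => hBldisj b (hWfacts.1 hb) b' (hWfacts.1 hb') hne) u hWgood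
  have httsub : ∀ i, t i ⊆ W.biUnion id := by
    intro i
    have h := htTr i
    simp only [trSet, Finset.mem_filter, Finset.mem_powersetCard] at h
    exact h.1.1
  have hunotin : ∀ i j, u j ∉ t i := fun i j hmem =>
    hnoU₀ W hW𝒲 (u j) (httsub i hmem) (huU₀ j)
  set f : Fin (k+1) → Finset α := fun i => insert (u i) (t i) with hf
  have hfP : ∀ i, f i ∈ P := htP
  have hfnotM : ∀ i, f i ∉ M := by
    intro i hfi
    exact hMUdisj (f i) hfi (u i) (Finset.mem_insert_self _ _) (huU i)
  have hfinj : Function.Injective f := by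
    intro i j hij
    have h1 : u i ∈ f j := hij ▸ Finset.mem_insert_self (u i) (t i)
    rcases Finset.mem_insert.mp h1 with h | h
    · exact huinj h
    · exact absurd h (hunotin j i)
  have hMWdisjf : ∀ e ∈ M \ W, ∀ j, Disjoint e (f j) := by
    intro e he j
    have heM := (Finset.mem_sdiff.mp he).1
    have heW := (Finset.mem_sdiff.mp he).2
    rw [Finset.disjoint_right]
    intro a haf hae
    rcases Finset.mem_insert.mp haf with h | h
    · exact hMUdisj e heM a hae (h ▸ huU j)
    · obtain ⟨b, hbW, hab⟩ := Finset.mem_biUnion.mp (httsub j h)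
      have hbBl : b ∈ Blocks := hWfacts.1 hbW
      have heBl : e ∈ Blocks := Finset.mem_union_left _ heM
      by_cases heb : e = b
      · exact heW (heb ▸ hbW)
      · exact Finset.disjoint_left.mp (hBldisj e heBl b hbBl heb) hae hab
  have hffdisj : ∀ i j, i ≠ j → Disjoint (f i) (f j) := by
    intro i j hne
    rw [Finset.disjoint_left]
    intro a hai haj
    rcases Finset.mem_insert.mp hai with h | h <;> rcases Finset.mem_insert.mp haj with h' | h'
    · exact hne (huinj (h.symm.trans h'))
    · exact hunotin j i (h ▸ h')
    · exact hunotin i j (h' ▸ h)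
    · exact Finset.disjoint_left.mp (htdisj i j hne) h h'
  set M' : Finset (Finset α) := (M \ W) ∪ Finset.univ.image f with hM'
  have hM'P : M' ⊆ P := by
    intro e he
    rcases Finset.mem_union.mp he with h | h
    · exact hMP (Finset.mem_sdiff.mp h).1
    · obtain ⟨i, _, rfl⟩ := Finset.mem_image.mp h
      exact hfP i
  have hM'match : ∀ e ∈ M', ∀ e' ∈ M', e ≠ e' → Disjoint e e' := by
    intro e he e' he' hne
    rcases Finset.mem_union.mp he with h | h <;> rcases Finset.mem_union.mp he' with h' | h'
    · exact hMdisj e (Finset.mem_sdiff.mp h).1 e' (Finset.mem_sdiff.mp h').1 hne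
    · obtain ⟨j, _, rfl⟩ := Finset.mem_image.mp h'
      exact hMWdisjf e h j
    · obtain ⟨j, _, rfl⟩ := Finset.mem_image.mp h
      exact (hMWdisjf e' h' j).symm
    · obtain ⟨i, _, rfl⟩ := Finset.mem_image.mp h
      obtain ⟨j, _, rfl⟩ := Finset.mem_image.mp h'
      exact hffdisj i j (fun hij => hne (hij ▸ rfl))
  have hM'cand : M' ∈ cand := by
    rw [hcand, Finset.mem_filter, Finset.mem_powerset]
    exact ⟨hM'P, hM'match⟩
  have hdisjMW : Disjoint (M \ W) (Finset.univ.image f) := by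
    rw [Finset.disjoint_right]
    intro e he heMW
    obtain ⟨i, _, rfl⟩ := Finset.mem_image.mp he
    exact hfnotM i (Finset.mem_sdiff.mp heMW).1
  have hM'card : M'.card = (M \ W).card + (k+1) := by
    rw [hM', Finset.card_union_of_disjoint hdisjMW, Finset.card_image_of_injective _ hfinj,
      Finset.card_univ, Fintype.card_fin]
  have hMWcard : M.card ≤ (M \ W).card + k := by
    have h1 : M ⊆ (M \ W) ∪ W := by
      intro e he
      by_cases h : e ∈ W
      · exact Finset.mem_union_right _ h
      · exact Finset.mem_union_left _ (Finset.mem_sdiff.mpr ⟨he, h⟩)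
    calc M.card ≤ ((M \ W) ∪ W).card := Finset.card_le_card h1
      _ ≤ (M \ W).card + W.card := Finset.card_union_le _ _
      _ = (M \ W).card + k := by rw [hWfacts.2]
  have hfinal := hMmax M' hM'cand
  omega
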